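/- For Algorithm-3 iterates with a saddle point (φ*, q*, μ*) of L, p* = Bφ*, b* = q*, step sizes ρ_r, ρ_s > 0 satisfying 2s − ρ_r − ρ_s s² − |ρ_r r − ρ_s s| > 0 and 2r − ρ_r r² − ρ_s − |ρ_r r − ρ_s s| > 0, and B injective with closed range: if G is uniformly convex on bounded subsets of V then φⁿ → φ* strongly in V and pⁿ → Bφ* strongly in H, and if moreover F is uniformly convex on bounded subsets of H then qⁿ → q* and bⁿ → q* strongly in H. -/

import Mathlib

open RealInnerProductSpace Filter Topology

/-- `u` is a subgradient of `J` at `x`. -/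
def IsSubgradient {E : Type*} [NormedAddCommGroup E] [InnerProductSpace ℝ E]
    (J : E → ℝ) (x u : E) : Prop :=
  ∀ z, J z ≥ J x + ⟪u, z - x⟫

/-- `J` is uniformly convex on the set `U`. -/
def UniformlyConvexOnSet {E : Type*} [NormedAddCommGroup E] [InnerProductSpace ℝ E]
    (J : E → ℝ) (U : Set E) : Prop :=
  ∃ Ψ : ℝ → ℝ, StrictMonoOn Ψ (Set.Ici 0) ∧ Ψ 0 = 0 ∧ (∀ t, 0 ≤ t → 0 ≤ Ψ t) ∧
    ∀ x ∈ U, ∀ y ∈ U, ∀ u v : E, IsSubgradient J x u → IsSubgradient J y v →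
      ⟪u - v, x - y⟫ ≥ Ψ ‖x - y‖

/-- `J` is uniformly convex on every bounded subset of its domain. -/
def UniformlyConvexOnBoundedSets {E : Type*} [NormedAddCommGroup E] [InnerProductSpace ℝ E]
    (J : E → ℝ) : Prop :=
  ∀ U : Set E, Bornology.IsBounded U → UniformlyConvexOnSet J U

lemma two_inner_le {H : Type*} [NormedAddCommGroup H] [InnerProductSpace ℝ H]
    (t : ℝ) (u v : H) : t * (2*⟪u,v⟫) ≤ |t| * (‖u‖^2 + ‖v‖^2) := by
  have h1 : |2*⟪u,v⟫| ≤ ‖u‖^2 + ‖v‖^2 := by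
    rw [abs_le]
    constructor
    · nlinarith [norm_add_sq_real u v, norm_nonneg (u+v), sq_nonneg ‖u+v‖]
    · nlinarith [norm_sub_sq_real u v, sq_nonneg ‖u-v‖]
  calc t * (2*⟪u,v⟫) ≤ |t * (2*⟪u,v⟫)| := le_abs_self _
    _ = |t| * |2*⟪u,v⟫| := abs_mul _ _
    _ ≤ |t| * (‖u‖^2 + ‖v‖^2) := mul_le_mul_of_nonneg_left h1 (abs_nonneg t)

lemma key_step {H : Type*} [NormedAddCommGroup H] [InnerProductSpace ℝ H]
    (r s ρr ρs gG gF : ℝ) (hρr : 0 < ρr) (hρs : 0 < ρs)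
    (X Q M N Et P Bb : H)
    (hA : ⟪N + r•(X - P), X⟫ ≤ -gG)
    (hB : gF ≤ ⟪Et + r•(Bb - Q), Q⟫)
    (hC : (0:ℝ) ≤ ⟪M, P - Bb - s•(M - N) - s•(M - Et)⟫) :
    ρs*(‖P - ρr•(M - N + r•(P - X))‖^2 + ‖Bb - ρr•(Et - M + r•(Bb - Q))‖^2)
      + ρr*(‖N + ρs•(X - P - s•(N - M))‖^2 + ‖Et + ρs•(Bb - Q - s•(Et - M))‖^2)
    ≤ ρs*(‖P‖^2 + ‖Bb‖^2) + ρr*(‖N‖^2 + ‖Et‖^2)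
      - ρr*ρs*(2*gG + 2*gF
        + (2*r - ρr*r^2 - ρs - |ρr*r - ρs*s|)*(‖X - P‖^2 + ‖Bb - Q‖^2)
        + (2*s - ρr - ρs*s^2 - |ρr*r - ρs*s|)*(‖M - N‖^2 + ‖M - Et‖^2)) := by
  have habs1 := two_inner_le (ρs*s - ρr*r) (X - P) (M - N)
  have habs2 := two_inner_le (ρs*s - ρr*r) (Bb - Q) (M - Et)
  have habscomm : |ρs*s - ρr*r| = |ρr*r - ρs*s| := abs_sub_comm _ _
  rw [habscomm] at habs1 habs2
  have hA' := mul_le_mul_of_nonneg_left hA (le_of_lt (mul_pos hρr hρs))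
  have hB' := mul_le_mul_of_nonneg_left hB (le_of_lt (mul_pos hρr hρs))
  have hC' := mul_le_mul_of_nonneg_left hC (le_of_lt (mul_pos hρr hρs))
  have habs1' := mul_le_mul_of_nonneg_left habs1 (le_of_lt (mul_pos hρr hρs))
  have habs2' := mul_le_mul_of_nonneg_left habs2 (le_of_lt (mul_pos hρr hρs))
  simp only [← real_inner_self_eq_norm_sq, inner_sub_left, inner_sub_right,
    inner_add_left, inner_add_right, real_inner_smul_left, real_inner_smul_right] at *
  simp only [real_inner_comm Q X, real_inner_comm M X, real_inner_comm N X,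
    real_inner_comm Et X, real_inner_comm P X, real_inner_comm Bb X, real_inner_comm M Q,
    real_inner_comm N Q, real_inner_comm Et Q, real_inner_comm P Q, real_inner_comm Bb Q,
    real_inner_comm N M, real_inner_comm Et M, real_inner_comm P M, real_inner_comm Bb M,
    real_inner_comm Et N, real_inner_comm P N, real_inner_comm Bb N, real_inner_comm P Et,
    real_inner_comm Bb Et, real_inner_comm Bb P] at hA' hB' hC' habs1' habs2' ⊢
  linarith [hA', hB', hC', habs1', habs2']

lemma subgrad_mono {E : Type*} [NormedAddCommGroup E] [InnerProductSpace ℝ E]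
    {J : E → ℝ} {x y u v : E} (hx : IsSubgradient J x u) (hy : IsSubgradient J y v) :
    0 ≤ ⟪u - v, x - y⟫ := by
  have h1 := hx y
  have h2 := hy x
  have e1 : ⟪u, y - x⟫ = -⟪u, x - y⟫ := by
    rw [← inner_neg_right]; congr 1; abel
  rw [inner_sub_left]
  linarith

lemma tendsto_zero_of_descent (E u : ℕ → ℝ) (hE : ∀ n, 0 ≤ E n) (hu : ∀ n, 0 ≤ u n)
    (h : ∀ n, E (n+1) + u n ≤ E n) : Tendsto u atTop (nhds 0) := by
  have hsum : ∀ N, ∑ i ∈ Finset.range N, u i ≤ E 0 := by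
    intro N
    have : ∀ N, ∑ i ∈ Finset.range N, u i ≤ E 0 - E N := by
      intro N
      induction N with
      | zero => simp
      | succ k ih =>
        rw [Finset.sum_range_succ]
        have := h k
        linarith
    linarith [this N, hE N]
  exact (summable_of_sum_range_le hu hsum).tendsto_atTop_zero

lemma tendsto_zero_of_psi (Ψ : ℝ → ℝ) (hmono : StrictMonoOn Ψ (Set.Ici 0)) (hΨ0 : Ψ 0 = 0)
    (t : ℕ → ℝ) (ht : ∀ n, 0 ≤ t n)
    (h : Tendsto (fun n => Ψ (t n)) atTop (nhds 0)) : Tendsto t atTop (nhds 0) := by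
  rw [Metric.tendsto_atTop]
  intro ε hε
  have hΨε : 0 < Ψ ε := by
    have := hmono (Set.mem_Ici.2 le_rfl) (Set.mem_Ici.2 hε.le) hε
    rwa [hΨ0] at this
  have hev : ∀ᶠ n in atTop, Ψ (t n) < Ψ ε := h.eventually (eventually_lt_nhds hΨε)
  obtain ⟨N, hN⟩ := eventually_atTop.1 hev
  refine ⟨N, fun n hn => ?_⟩
  rw [Real.dist_eq, sub_zero, abs_of_nonneg (ht n)]
  by_contra hc
  push_neg at hc
  exact absurd (hN n hn) (not_lt.2 (hmono.monotoneOn (Set.mem_Ici.2 hε.le)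
    (Set.mem_Ici.2 (ht n)) hc))

lemma exists_bound_of_inj_closed {V H : Type*}
    [NormedAddCommGroup V] [InnerProductSpace ℝ V] [CompleteSpace V]
    [NormedAddCommGroup H] [InnerProductSpace ℝ H] [CompleteSpace H]
    (B : V →L[ℝ] H) (hBinj : Function.Injective B) (hBrange : IsClosed (Set.range B)) :
    ∃ C : ℝ, 0 ≤ C ∧ ∀ v : V, ‖v‖ ≤ C * ‖B v‖ := by
  set K : Submodule ℝ H := LinearMap.range (B : V →ₗ[ℝ] H) with hK
  have hKclosed : IsClosed (K : Set H) := by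
    have : (K : Set H) = Set.range B := by
      ext x; simp [hK, LinearMap.mem_range, Set.mem_range]
    rwa [this]
  haveI : CompleteSpace K := hKclosed.completeSpace_coe
  have hmem : ∀ v : V, B v ∈ K := fun v => LinearMap.mem_range.2 ⟨v, rfl⟩
  set f : V →L[ℝ] K := B.codRestrict K hmem with hf
  have hinj : Function.Injective f := by
    intro a b hab
    apply hBinj
    have : (f a : H) = (f b : H) := by rw [hab]
    simpa [hf] using this
  have hsur : Function.Surjective f := by
    rintro ⟨y, hy⟩
    obtain ⟨x, hx⟩ := LinearMap.mem_range.1 hy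
    exact ⟨x, by ext; simpa [hf] using hx⟩
  have hker : f.ker = ⊥ := LinearMap.ker_eq_bot.2 hinj
  have hrange : f.range = ⊤ := LinearMap.range_eq_top.2 hsur
  let e := ContinuousLinearEquiv.ofBijective f hker hrange
  refine ⟨‖(e.symm : K →L[ℝ] V)‖, norm_nonneg _, fun v => ?_⟩
  have h1 : v = e.symm (e v) := (e.symm_apply_apply v).symm
  have h2 : ‖e.symm (e v)‖ ≤ ‖(e.symm : K →L[ℝ] V)‖ * ‖e v‖ :=
    (e.symm : K →L[ℝ] V).le_opNorm (e v)
  have h3 : ‖e v‖ = ‖B v‖ := by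
    have : ((e v : K) : H) = B v := rfl
    rw [← this]; rfl
  rw [h3] at h2
  calc ‖v‖ = ‖e.symm (e v)‖ := by rw [← h1]
    _ ≤ _ := h2

lemma tendsto_zero_of_const_mul (c : ℝ) (hc : 0 < c) (f : ℕ → ℝ)
    (h : Tendsto (fun n => c * f n) atTop (nhds 0)) : Tendsto f atTop (nhds 0) := by
  have h2 := h.const_mul c⁻¹
  rw [mul_zero] at h2
  have : (fun n => c⁻¹ * (c * f n)) = f := by
    funext n; field_simp
  rwa [this] at h2

lemma norm_tendsto_of_sq (f : ℕ → ℝ) (hf : ∀ n, 0 ≤ f n)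
    (h : Tendsto (fun n => f n ^ 2) atTop (nhds 0)) : Tendsto f atTop (nhds 0) := by
  have h2 : Tendsto (fun n => Real.sqrt (f n ^ 2)) atTop (nhds 0) := by
    have := (Real.continuous_sqrt.tendsto 0).comp h
    simpa [Function.comp_def] using this
  have : (fun n => Real.sqrt (f n ^ 2)) = f := by
    funext n; rw [Real.sqrt_sq (hf n)]
  rwa [this] at h2

lemma le_sqrt_of_sq_le (x t : ℝ) (hx : 0 ≤ x) (h : x^2 ≤ t) : x ≤ Real.sqrt t := by
  calc x = Real.sqrt (x^2) := (Real.sqrt_sq hx).symm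
    _ ≤ Real.sqrt t := Real.sqrt_le_sqrt h

set_option maxHeartbeats 1000000 in
/-- For Algorithm-3 iterates with B injective with closed range:
if G is uniformly convex on bounded subsets of V then φⁿ → φ* strongly and
pⁿ → Bφ* strongly, and if moreover F is uniformly convex on bounded subsets of H
then qⁿ → q* and bⁿ → q* strongly. -/
theorem algorithm3_strong_convergence
    {V H : Type*} [NormedAddCommGroup V] [InnerProductSpace ℝ V] [CompleteSpace V]
    [NormedAddCommGroup H] [InnerProductSpace ℝ H] [CompleteSpace H]
    (B : V →L[ℝ] H) (F : H → ℝ) (G : V → ℝ) (I : H → ℝ)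
    (hFconv : ConvexOn ℝ Set.univ F) (hFlsc : LowerSemicontinuous F)
    (hGconv : ConvexOn ℝ Set.univ G) (hGlsc : LowerSemicontinuous G)
    (hIconv : ConvexOn ℝ Set.univ I) (hIlsc : LowerSemicontinuous I)
    (L : V → H → H → ℝ)
    (hL : ∀ (φ' : V) (q' μ' : H), L φ' q' μ' = F q' + G φ' - I μ' + ⟪μ', B φ' - q'⟫)
    (r s ρr ρs : ℝ) (hr : 0 < r) (hs : 0 < s) (hρr : 0 < ρr) (hρs : 0 < ρs)
    (hstep1 : 0 < 2*s - ρr - ρs*s^2 - |ρr*r - ρs*s|)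
    (hstep2 : 0 < 2*r - ρr*r^2 - ρs - |ρr*r - ρs*s|)
    (φs : V) (qs μs : H) (ps bs : H) (hps : ps = B φs) (hbs : bs = qs)
    (hsaddle : ∀ (φ' : V) (q' μ' : H), L φs qs μ' ≤ L φs qs μs ∧ L φs qs μs ≤ L φ' q' μs)
    (φ : ℕ → V) (q μ p b ν η : ℕ → H)
    (hi : ∀ n, 1 ≤ n → ∀ φ' : V,
      G φ' - G (φ n) + ⟪ν (n-1), B φ' - B (φ n)⟫
        + r * ⟪B (φ n) - p (n-1), B φ' - B (φ n)⟫ ≥ 0)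
    (hii : ∀ n, 1 ≤ n → ∀ q' : H,
      F q' - F (q n) + ⟪η (n-1), q n - q'⟫ + r * ⟪b (n-1) - q n, q n - q'⟫ ≥ 0)
    (hiii : ∀ n, 1 ≤ n → ∀ μ' : H,
      I μ' - I (μ n) + ⟪μ n - μ', p (n-1) - b (n-1)⟫ - s * ⟪μ n - μ', μ n - ν (n-1)⟫
        - s * ⟪μ n - μ', μ n - η (n-1)⟫ ≥ 0)
    (hiv : ∀ n, 1 ≤ n →
      p n = p (n-1) - ρr • (μ n - ν (n-1) + r • (p (n-1) - B (φ n))) ∧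
      b n = b (n-1) - ρr • (η (n-1) - μ n + r • (b (n-1) - q n)))
    (hv : ∀ n, 1 ≤ n →
      ν n = ν (n-1) + ρs • (B (φ n) - p (n-1) - s • (ν (n-1) - μ n)) ∧
      η n = η (n-1) + ρs • (b (n-1) - q n - s • (η (n-1) - μ n)))
    (hBinj : Function.Injective B) (hBrange : IsClosed (Set.range B)) :
    UniformlyConvexOnBoundedSets G →
      (Tendsto φ atTop (nhds φs) ∧
       Tendsto p atTop (nhds (B φs)) ∧
       (UniformlyConvexOnBoundedSets F →
         Tendsto q atTop (nhds qs) ∧ Tendsto b atTop (nhds qs))) := by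
  intro hGuc
  -- saddle point subgradient consequences
  have hsubGs : IsSubgradient G φs (-(ContinuousLinearMap.adjoint B) μs) := by
    intro z
    have h := (hsaddle z qs μs).2
    simp only [hL] at h
    have e1 : ⟪μs, B z - qs⟫ - ⟪μs, B φs - qs⟫ = ⟪μs, B z - B φs⟫ := by
      rw [← inner_sub_right]; congr 1; abel
    have e2 : ⟪-(ContinuousLinearMap.adjoint B) μs, z - φs⟫ = -⟪μs, B z - B φs⟫ := by
      rw [inner_neg_left, ContinuousLinearMap.adjoint_inner_left, map_sub]
    rw [ge_iff_le, e2]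
    linarith
  have hsubFs : IsSubgradient F qs μs := by
    intro z
    have h := (hsaddle φs z μs).2
    simp only [hL] at h
    have e1 : ⟪μs, B φs - z⟫ - ⟪μs, B φs - qs⟫ = -⟪μs, z - qs⟫ := by
      rw [← inner_sub_right, ← inner_neg_right]; congr 1; abel
    linarith
  have hsubIs : IsSubgradient I μs (B φs - qs) := by
    intro z
    have h := (hsaddle φs qs z).1
    simp only [hL] at h
    have e1 : ⟪z, B φs - qs⟫ - ⟪μs, B φs - qs⟫ = ⟪B φs - qs, z - μs⟫ := by
      rw [← inner_sub_left]; exact real_inner_comm _ _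
    linarith
  -- iterate subgradients
  have hsubGn : ∀ n : ℕ, IsSubgradient G (φ (n+1))
      (-(ContinuousLinearMap.adjoint B) (ν n + r • (B (φ (n+1)) - p n))) := by
    intro n z
    have h := hi (n+1) (by omega) z
    simp only [Nat.add_sub_cancel] at h
    have e2 : ⟪-(ContinuousLinearMap.adjoint B) (ν n + r • (B (φ (n+1)) - p n)), z - φ (n+1)⟫
        = -(⟪ν n, B z - B (φ (n+1))⟫ + r * ⟪B (φ (n+1)) - p n, B z - B (φ (n+1))⟫) := by
      rw [inner_neg_left, ContinuousLinearMap.adjoint_inner_left, map_sub, inner_add_left,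
        real_inner_smul_left]
    rw [ge_iff_le, e2]
    linarith
  have hsubFn : ∀ n : ℕ, IsSubgradient F (q (n+1)) (η n + r • (b n - q (n+1))) := by
    intro n z
    have h := hii (n+1) (by omega) z
    simp only [Nat.add_sub_cancel] at h
    have ha : z - q (n+1) = -(q (n+1) - z) := by abel
    have e2 : ⟪η n + r • (b n - q (n+1)), z - q (n+1)⟫
        = -(⟪η n, q (n+1) - z⟫ + r * ⟪b n - q (n+1), q (n+1) - z⟫) := by
      rw [ha, inner_neg_right, inner_add_left, real_inner_smul_left]
    rw [ge_iff_le, e2]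
    linarith
  have hsubIn : ∀ n : ℕ, IsSubgradient I (μ (n+1))
      (p n - b n - s • (μ (n+1) - ν n) - s • (μ (n+1) - η n)) := by
    intro n z
    have h := hiii (n+1) (by omega) z
    simp only [Nat.add_sub_cancel] at h
    have ha : z - μ (n+1) = -(μ (n+1) - z) := by abel
    have e2 : ⟪p n - b n - s • (μ (n+1) - ν n) - s • (μ (n+1) - η n), z - μ (n+1)⟫
        = -(⟪μ (n+1) - z, p n - b n⟫ - s * ⟪μ (n+1) - z, μ (n+1) - ν n⟫
            - s * ⟪μ (n+1) - z, μ (n+1) - η n⟫) := by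
      rw [ha, inner_neg_right, real_inner_comm]
      congr 1
      rw [inner_sub_right, inner_sub_right, real_inner_smul_right, real_inner_smul_right]
    rw [ge_iff_le, e2]
    linarith
  -- transfer lemmas
  have hAkey : ∀ (n : ℕ) (g : ℝ),
      g ≤ ⟪(-(ContinuousLinearMap.adjoint B) (ν n + r • (B (φ (n+1)) - p n)))
          - (-(ContinuousLinearMap.adjoint B) μs), φ (n+1) - φs⟫ →
      ⟪(ν n - μs) + r • ((B (φ (n+1)) - B φs) - (p n - B φs)), B (φ (n+1)) - B φs⟫ ≤ -g := by
    intro n g hg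
    have e1 : (-(ContinuousLinearMap.adjoint B) (ν n + r • (B (φ (n+1)) - p n)))
        - (-(ContinuousLinearMap.adjoint B) μs)
        = (ContinuousLinearMap.adjoint B) (μs - (ν n + r • (B (φ (n+1)) - p n))) := by
      rw [map_sub]; abel
    rw [e1, ContinuousLinearMap.adjoint_inner_left, map_sub] at hg
    have e2 : μs - (ν n + r • (B (φ (n+1)) - p n))
        = -((ν n - μs) + r • ((B (φ (n+1)) - B φs) - (p n - B φs))) := by module
    rw [e2, inner_neg_left] at hg
    linarith
  have hBkey : ∀ (n : ℕ) (g : ℝ),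
      g ≤ ⟪(η n + r • (b n - q (n+1))) - μs, q (n+1) - qs⟫ →
      g ≤ ⟪(η n - μs) + r • ((b n - qs) - (q (n+1) - qs)), q (n+1) - qs⟫ := by
    intro n g hg
    have e : (η n + r • (b n - q (n+1))) - μs
        = (η n - μs) + r • ((b n - qs) - (q (n+1) - qs)) := by module
    rwa [e] at hg
  have hC0 : ∀ n : ℕ, (0:ℝ) ≤ ⟪μ (n+1) - μs, (p n - B φs) - (b n - qs)
      - s • ((μ (n+1) - μs) - (ν n - μs)) - s • ((μ (n+1) - μs) - (η n - μs))⟫ := by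
    intro n
    have h := subgrad_mono (hsubIn n) hsubIs
    have e : (p n - b n - s • (μ (n+1) - ν n) - s • (μ (n+1) - η n)) - (B φs - qs)
        = (p n - B φs) - (b n - qs) - s • ((μ (n+1) - μs) - (ν n - μs))
          - s • ((μ (n+1) - μs) - (η n - μs)) := by module
    rw [e] at h
    rw [real_inner_comm]
    exact h
  -- the Lyapunov functional
  set EE : ℕ → ℝ := fun n => ρs*(‖p n - B φs‖^2 + ‖b n - qs‖^2)
      + ρr*(‖ν n - μs‖^2 + ‖η n - μs‖^2) with hEE
  have hstepineq : ∀ (n : ℕ) (gG gF : ℝ),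
      ⟪(ν n - μs) + r • ((B (φ (n+1)) - B φs) - (p n - B φs)), B (φ (n+1)) - B φs⟫ ≤ -gG →
      gF ≤ ⟪(η n - μs) + r • ((b n - qs) - (q (n+1) - qs)), q (n+1) - qs⟫ →
      EE (n+1) ≤ EE n - ρr*ρs*(2*gG + 2*gF
        + (2*r - ρr*r^2 - ρs - |ρr*r - ρs*s|)
            *(‖(B (φ (n+1)) - B φs) - (p n - B φs)‖^2 + ‖(b n - qs) - (q (n+1) - qs)‖^2)
        + (2*s - ρr - ρs*s^2 - |ρr*r - ρs*s|)
            *(‖(μ (n+1) - μs) - (ν n - μs)‖^2 + ‖(μ (n+1) - μs) - (η n - μs)‖^2)) := by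
    intro n gG gF hA hB
    have key := key_step r s ρr ρs gG gF hρr hρs (B (φ (n+1)) - B φs) (q (n+1) - qs)
      (μ (n+1) - μs) (ν n - μs) (η n - μs) (p n - B φs) (b n - qs) hA hB (hC0 n)
    have h1 : p (n+1) - B φs = (p n - B φs) - ρr • ((μ (n+1) - μs) - (ν n - μs)
        + r • ((p n - B φs) - (B (φ (n+1)) - B φs))) := by
      have h := (hiv (n+1) (by omega)).1
      simp only [Nat.add_sub_cancel] at h
      rw [h]; module
    have h2 : b (n+1) - qs = (b n - qs) - ρr • ((η n - μs) - (μ (n+1) - μs)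
        + r • ((b n - qs) - (q (n+1) - qs))) := by
      have h := (hiv (n+1) (by omega)).2
      simp only [Nat.add_sub_cancel] at h
      rw [h]; module
    have h3 : ν (n+1) - μs = (ν n - μs) + ρs • ((B (φ (n+1)) - B φs) - (p n - B φs)
        - s • ((ν n - μs) - (μ (n+1) - μs))) := by
      have h := (hv (n+1) (by omega)).1
      simp only [Nat.add_sub_cancel] at h
      rw [h]; module
    have h4 : η (n+1) - μs = (η n - μs) + ρs • ((b n - qs) - (q (n+1) - qs)
        - s • ((η n - μs) - (μ (n+1) - μs))) := by
      have h := (hv (n+1) (by omega)).2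
      simp only [Nat.add_sub_cancel] at h
      rw [h]; module
    simp only [hEE]
    rw [h1, h2, h3, h4]
    exact key
  have hE0 : ∀ n, 0 ≤ EE n := by
    intro n; simp only [hEE]; positivity
  have hA0 : ∀ n : ℕ,
      ⟪(ν n - μs) + r • ((B (φ (n+1)) - B φs) - (p n - B φs)), B (φ (n+1)) - B φs⟫ ≤ -(0:ℝ) :=
    fun n => hAkey n 0 (subgrad_mono (hsubGn n) hsubGs)
  have hB0 : ∀ n : ℕ,
      (0:ℝ) ≤ ⟪(η n - μs) + r • ((b n - qs) - (q (n+1) - qs)), q (n+1) - qs⟫ :=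
    fun n => hBkey n 0 (subgrad_mono (hsubFn n) hsubFs)
  set a2 : ℕ → ℝ := fun n => ‖(B (φ (n+1)) - B φs) - (p n - B φs)‖^2
      + ‖(b n - qs) - (q (n+1) - qs)‖^2 with ha2
  set d2 : ℕ → ℝ := fun n => ‖(μ (n+1) - μs) - (ν n - μs)‖^2
      + ‖(μ (n+1) - μs) - (η n - μs)‖^2 with hd2
  have ha2nn : ∀ n, 0 ≤ a2 n := by intro n; simp only [ha2]; positivity
  have hd2nn : ∀ n, 0 ≤ d2 n := by intro n; simp only [hd2]; positivity
  have hdes1 : ∀ n, EE (n+1) + ρr*ρs*((2*r - ρr*r^2 - ρs - |ρr*r - ρs*s|)*a2 n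
      + (2*s - ρr - ρs*s^2 - |ρr*r - ρs*s|)*d2 n) ≤ EE n := by
    intro n
    have h := hstepineq n 0 0 (hA0 n) (hB0 n)
    simp only [ha2, hd2]
    linarith
  have hquadnn : ∀ n, 0 ≤ ρr*ρs*((2*r - ρr*r^2 - ρs - |ρr*r - ρs*s|)*a2 n
      + (2*s - ρr - ρs*s^2 - |ρr*r - ρs*s|)*d2 n) :=
    fun n => mul_nonneg (mul_pos hρr hρs).le
      (add_nonneg (mul_nonneg hstep2.le (ha2nn n)) (mul_nonneg hstep1.le (hd2nn n)))
  have hmonoE : ∀ n, EE (n+1) ≤ EE n := by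
    intro n; have h1 := hdes1 n; have h2 := hquadnn n; linarith
  have hEle : ∀ n, EE n ≤ EE 0 := by
    intro n
    induction n with
    | zero => exact le_refl _
    | succ k ih => exact le_trans (hmonoE k) ih
  have hL1 := tendsto_zero_of_descent EE
    (fun n => ρr*ρs*((2*r - ρr*r^2 - ρs - |ρr*r - ρs*s|)*a2 n
      + (2*s - ρr - ρs*s^2 - |ρr*r - ρs*s|)*d2 n)) hE0 hquadnn hdes1
  have ha2tend : Tendsto a2 atTop (nhds 0) := by
    apply tendsto_zero_of_const_mul (ρr*ρs*(2*r - ρr*r^2 - ρs - |ρr*r - ρs*s|))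
      (mul_pos (mul_pos hρr hρs) hstep2)
    refine squeeze_zero (fun n => mul_nonneg (mul_pos (mul_pos hρr hρs) hstep2).le (ha2nn n))
      (fun n => ?_) hL1
    have h4 := mul_nonneg (mul_pos hρr hρs).le (mul_nonneg hstep1.le (hd2nn n))
    nlinarith [ha2nn n]
  -- bounds
  have ha2le : ∀ n, a2 n ≤ EE 0 / (ρr*ρs*(2*r - ρr*r^2 - ρs - |ρr*r - ρs*s|)) := by
    intro n
    rw [le_div_iff₀ (mul_pos (mul_pos hρr hρs) hstep2)]
    have h1 := hdes1 n
    have h2 := hE0 (n+1)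
    have h3 := hEle n
    have h4 := mul_nonneg (mul_pos hρr hρs).le (mul_nonneg hstep1.le (hd2nn n))
    nlinarith
  set SA : ℝ := Real.sqrt (EE 0 / (ρr*ρs*(2*r - ρr*r^2 - ρs - |ρr*r - ρs*s|))) with hSA
  set SP : ℝ := Real.sqrt (EE 0 / ρs) with hSP
  have haBound : ∀ n, ‖(B (φ (n+1)) - B φs) - (p n - B φs)‖ ≤ SA := by
    intro n
    rw [hSA]
    apply le_sqrt_of_sq_le _ _ (norm_nonneg _)
    refine le_trans ?_ (ha2le n)
    simp only [ha2]
    nlinarith [sq_nonneg ‖(b n - qs) - (q (n+1) - qs)‖]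
  have hcBound : ∀ n, ‖(b n - qs) - (q (n+1) - qs)‖ ≤ SA := by
    intro n
    rw [hSA]
    apply le_sqrt_of_sq_le _ _ (norm_nonneg _)
    refine le_trans ?_ (ha2le n)
    simp only [ha2]
    nlinarith [sq_nonneg ‖(B (φ (n+1)) - B φs) - (p n - B φs)‖]
  have hPBound : ∀ n, ‖p n - B φs‖ ≤ SP := by
    intro n
    rw [hSP]
    apply le_sqrt_of_sq_le _ _ (norm_nonneg _)
    rw [le_div_iff₀ hρs]
    have h5 : ρs * ‖p n - B φs‖^2 ≤ EE n := by
      simp only [hEE]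
      have h6 := mul_nonneg hρs.le (sq_nonneg ‖b n - qs‖)
      have h7 := mul_nonneg hρr.le (add_nonneg (sq_nonneg ‖ν n - μs‖) (sq_nonneg ‖η n - μs‖))
      linarith
    have h3 := hEle n
    linarith
  have hbBound : ∀ n, ‖b n - qs‖ ≤ SP := by
    intro n
    rw [hSP]
    apply le_sqrt_of_sq_le _ _ (norm_nonneg _)
    rw [le_div_iff₀ hρs]
    have h5 : ρs * ‖b n - qs‖^2 ≤ EE n := by
      simp only [hEE]
      have h6 := mul_nonneg hρs.le (sq_nonneg ‖p n - B φs‖)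
      have h7 := mul_nonneg hρr.le (add_nonneg (sq_nonneg ‖ν n - μs‖) (sq_nonneg ‖η n - μs‖))
      linarith
    have h3 := hEle n
    linarith
  obtain ⟨C, hCnn, hCb⟩ := exists_bound_of_inj_closed B hBinj hBrange
  have hφBound : ∀ n, ‖φ (n+1) - φs‖ ≤ C * (SA + SP) := by
    intro n
    have h1 := hCb (φ (n+1) - φs)
    rw [map_sub] at h1
    have h2 : ‖B (φ (n+1)) - B φs‖ ≤ SA + SP := by
      have e : B (φ (n+1)) - B φs
          = ((B (φ (n+1)) - B φs) - (p n - B φs)) + (p n - B φs) := by abel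
      rw [e]
      exact le_trans (norm_add_le _ _) (add_le_add (haBound n) (hPBound n))
    calc ‖φ (n+1) - φs‖ ≤ C * ‖B (φ (n+1)) - B φs‖ := h1
      _ ≤ C * (SA + SP) := mul_le_mul_of_nonneg_left h2 hCnn
  have hRnn : 0 ≤ C * (SA + SP) :=
    mul_nonneg hCnn (add_nonneg (Real.sqrt_nonneg _) (Real.sqrt_nonneg _))
  obtain ⟨ΨG, hΨm, hΨ0', hΨnn, hΨineq⟩ :=
    hGuc (Metric.closedBall φs (C * (SA + SP))) Metric.isBounded_closedBall
  have hφsU : φs ∈ Metric.closedBall φs (C * (SA + SP)) := Metric.mem_closedBall_self hRnn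
  have hφnU : ∀ n, φ (n+1) ∈ Metric.closedBall φs (C * (SA + SP)) := by
    intro n
    rw [Metric.mem_closedBall, dist_eq_norm]
    exact hφBound n
  have hdes2 : ∀ n, EE (n+1) + ρr*ρs*(2*(ΨG ‖φ (n+1) - φs‖)) ≤ EE n := by
    intro n
    have hA := hAkey n (ΨG ‖φ (n+1) - φs‖)
      (hΨineq (φ (n+1)) (hφnU n) φs hφsU _ _ (hsubGn n) hsubGs)
    have h := hstepineq n (ΨG ‖φ (n+1) - φs‖) 0 hA (hB0 n)
    have hq := hquadnn n
    simp only [ha2, hd2] at hq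
    linarith
  have hu2nn : ∀ n, 0 ≤ ρr*ρs*(2*(ΨG ‖φ (n+1) - φs‖)) := by
    intro n
    have := hΨnn _ (norm_nonneg (φ (n+1) - φs))
    have := (mul_pos hρr hρs).le
    positivity
  have hL2 := tendsto_zero_of_descent EE (fun n => ρr*ρs*(2*(ΨG ‖φ (n+1) - φs‖)))
    hE0 hu2nn hdes2
  have hΨtend : Tendsto (fun n => ΨG ‖φ (n+1) - φs‖) atTop (nhds 0) := by
    apply tendsto_zero_of_const_mul (ρr*ρs*2) (by positivity)
    have e : (fun n => ρr*ρs*2 * (ΨG ‖φ (n+1) - φs‖))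
        = fun n => ρr*ρs*(2*(ΨG ‖φ (n+1) - φs‖)) := by funext n; ring
    rw [e]
    exact hL2
  have hφnormtend := tendsto_zero_of_psi ΨG hΨm hΨ0' _ (fun n => norm_nonneg _) hΨtend
  have hφshift : Tendsto (fun n => φ (n+1)) atTop (nhds φs) := by
    rw [tendsto_iff_norm_sub_tendsto_zero]
    exact hφnormtend
  have hφ : Tendsto φ atTop (nhds φs) := (tendsto_add_atTop_iff_nat 1).1 hφshift
  -- p convergence
  have hnrmAtend : Tendsto (fun n => ‖(B (φ (n+1)) - B φs) - (p n - B φs)‖) atTop (nhds 0) := by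
    apply norm_tendsto_of_sq _ (fun n => norm_nonneg _)
    refine squeeze_zero (fun n => sq_nonneg _) (fun n => ?_) ha2tend
    simp only [ha2]
    nlinarith [sq_nonneg ‖(b n - qs) - (q (n+1) - qs)‖]
  have hAvec : Tendsto (fun n => (B (φ (n+1)) - B φs) - (p n - B φs)) atTop (nhds 0) :=
    tendsto_zero_iff_norm_tendsto_zero.2 hnrmAtend
  have hXtend : Tendsto (fun n => B (φ (n+1)) - B φs) atTop (nhds 0) := by
    have h1 : Tendsto (fun n => B (φ (n+1))) atTop (nhds (B φs)) :=
      (B.continuous.tendsto φs).comp hφshift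
    have h2 := h1.sub_const (B φs)
    rwa [sub_self] at h2
  have hPtend : Tendsto (fun n => p n - B φs) atTop (nhds 0) := by
    have h := hXtend.sub hAvec
    rw [sub_zero] at h
    have e : (fun n => (B (φ (n+1)) - B φs) - ((B (φ (n+1)) - B φs) - (p n - B φs)))
        = fun n => p n - B φs := by funext n; abel
    rwa [e] at h
  have hp : Tendsto p atTop (nhds (B φs)) := by
    rw [tendsto_iff_norm_sub_tendsto_zero]
    exact tendsto_zero_iff_norm_tendsto_zero.1 hPtend
  refine ⟨hφ, hp, ?_⟩
  intro hFuc
  -- q convergence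
  have hqBound : ∀ n, ‖q (n+1) - qs‖ ≤ SP + SA := by
    intro n
    have e : q (n+1) - qs = (b n - qs) - ((b n - qs) - (q (n+1) - qs)) := by abel
    rw [e]
    exact le_trans (norm_sub_le _ _) (add_le_add (hbBound n) (hcBound n))
  have hRqnn : (0:ℝ) ≤ SP + SA := add_nonneg (Real.sqrt_nonneg _) (Real.sqrt_nonneg _)
  obtain ⟨ΨF, hFm, hF0', hFnn, hFineq⟩ :=
    hFuc (Metric.closedBall qs (SP + SA)) Metric.isBounded_closedBall
  have hqsU : qs ∈ Metric.closedBall qs (SP + SA) := Metric.mem_closedBall_self hRqnn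
  have hqnU : ∀ n, q (n+1) ∈ Metric.closedBall qs (SP + SA) := by
    intro n
    rw [Metric.mem_closedBall, dist_eq_norm]
    exact hqBound n
  have hdes3 : ∀ n, EE (n+1) + ρr*ρs*(2*(ΨF ‖q (n+1) - qs‖)) ≤ EE n := by
    intro n
    have hB := hBkey n (ΨF ‖q (n+1) - qs‖)
      (hFineq (q (n+1)) (hqnU n) qs hqsU _ _ (hsubFn n) hsubFs)
    have h := hstepineq n 0 (ΨF ‖q (n+1) - qs‖) (hA0 n) hB
    have hq := hquadnn n
    simp only [ha2, hd2] at hq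
    linarith
  have hu3nn : ∀ n, 0 ≤ ρr*ρs*(2*(ΨF ‖q (n+1) - qs‖)) := by
    intro n
    have := hFnn _ (norm_nonneg (q (n+1) - qs))
    positivity
  have hL3 := tendsto_zero_of_descent EE (fun n => ρr*ρs*(2*(ΨF ‖q (n+1) - qs‖)))
    hE0 hu3nn hdes3
  have hFtend : Tendsto (fun n => ΨF ‖q (n+1) - qs‖) atTop (nhds 0) := by
    apply tendsto_zero_of_const_mul (ρr*ρs*2) (by positivity)
    have e : (fun n => ρr*ρs*2 * (ΨF ‖q (n+1) - qs‖))
        = fun n => ρr*ρs*(2*(ΨF ‖q (n+1) - qs‖)) := by funext n; ring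
    rw [e]
    exact hL3
  have hqnormtend := tendsto_zero_of_psi ΨF hFm hF0' _ (fun n => norm_nonneg _) hFtend
  have hqshift : Tendsto (fun n => q (n+1)) atTop (nhds qs) := by
    rw [tendsto_iff_norm_sub_tendsto_zero]
    exact hqnormtend
  have hq : Tendsto q atTop (nhds qs) := (tendsto_add_atTop_iff_nat 1).1 hqshift
  -- b convergence
  have hnrmCtend : Tendsto (fun n => ‖(b n - qs) - (q (n+1) - qs)‖) atTop (nhds 0) := by
    apply norm_tendsto_of_sq _ (fun n => norm_nonneg _)
    refine squeeze_zero (fun n => sq_nonneg _) (fun n => ?_) ha2tend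
    simp only [ha2]
    nlinarith [sq_nonneg ‖(B (φ (n+1)) - B φs) - (p n - B φs)‖]
  have hCvec : Tendsto (fun n => (b n - qs) - (q (n+1) - qs)) atTop (nhds 0) :=
    tendsto_zero_iff_norm_tendsto_zero.2 hnrmCtend
  have hQvec : Tendsto (fun n => q (n+1) - qs) atTop (nhds 0) :=
    tendsto_zero_iff_norm_tendsto_zero.2 hqnormtend
  have hbvec : Tendsto (fun n => b n - qs) atTop (nhds 0) := by
    have h := hQvec.add hCvec
    rw [add_zero] at h
    have e : (fun n => (q (n+1) - qs) + ((b n - qs) - (q (n+1) - qs)))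
        = fun n => b n - qs := by funext n; abel
    rwa [e] at h
  have hb : Tendsto b atTop (nhds qs) := by
    rw [tendsto_iff_norm_sub_tendsto_zero]
    exact tendsto_zero_iff_norm_tendsto_zero.1 hbvec
  exact ⟨hq, hb⟩
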